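/- (Proposition 7, median voter theorem.) Fix a classifier δ with ρ(δ,φ) ≠ 0 and let r* = k_μ*(t)/ρ(δ,φ). Then for every alternative reward r ∈ ℝ, the set of costs {γ ∈ ℝ : V(r* | γ) ≥ V(r | γ)} has probability at least 1/2 under the distribution with CDF F; that is, r* is weakly preferred to any other reward by at least half of the population (a Condorcet winner). If instead ρ(δ,φ) = 0, then V(r | γ) is constant in r for every γ, so all voters are indifferent among all rewards. -/

import Mathlib

open MeasureTheory

/-- A cost distribution: a CDF `F` with continuously differentiable structure
given by a strictly positive, differentiable, log-concave density `f` with full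
support on `ℝ`. -/
structure CostDist where
  F : ℝ → ℝ
  f : ℝ → ℝ
  deriv_eq : ∀ x : ℝ, HasDerivAt F (f x) x
  f_pos : ∀ x : ℝ, 0 < f x
  f_diff : Differentiable ℝ f
  f_logConcave : ConcaveOn ℝ Set.univ fun x => Real.log (f x)
  tendsto_bot : Filter.Tendsto F Filter.atBot (nhds 0)
  tendsto_top : Filter.Tendsto F Filter.atTop (nhds 1)

/-- Expected responsiveness of the classifier `δ = (δ₁, δ₀)` at precision `φ`. -/
noncomputable def rho (d1 d0 phi : ℝ) : ℝ := (d1 + d0 - 1) * (2 * phi - 1)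

/-- The designer's expected payoff `EU_D(δ | r)`. -/
noncomputable def EUD (D : CostDist) (phi A1 A0 B1 B0 r d1 d0 : ℝ) : ℝ :=
  D.F (r * rho d1 d0 phi) *
      (phi * (A1 * d1 + A0 * (1 - d1)) + (1 - phi) * (A0 * d0 + A1 * (1 - d0))) +
    (1 - D.F (r * rho d1 d0 phi)) *
      (phi * (B1 * d0 + B0 * (1 - d0)) + (1 - phi) * (B0 * d1 + B1 * (1 - d1)))

/-- A voter's expected payoff conditional on complying, `EU₁(r | γ)`. -/
noncomputable def EU1 (D : CostDist) (phi t gamma d1 d0 r : ℝ) : ℝ :=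
  -gamma + r * rho d1 d0 phi * (1 - D.F (r * rho d1 d0 phi)) + t * D.F (r * rho d1 d0 phi)

/-- A voter's expected payoff conditional on not complying, `EU₀(r)`. -/
noncomputable def EU0 (D : CostDist) (phi t d1 d0 r : ℝ) : ℝ :=
  -(r * rho d1 d0 phi) * D.F (r * rho d1 d0 phi) + t * D.F (r * rho d1 d0 phi)

/-- A voter's overall payoff `V(r | γ) = max(EU₁(r | γ), EU₀(r))`. -/
noncomputable def V (D : CostDist) (phi t gamma d1 d0 r : ℝ) : ℝ :=
  max (EU1 D phi t gamma d1 d0 r) (EU0 D phi t d1 d0 r)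

/-- Strict quasiconcavity of a real function on a set. -/
def StrictQuasiconcaveOn (s : Set ℝ) (g : ℝ → ℝ) : Prop :=
  ∀ ⦃x⦄, x ∈ s → ∀ ⦃y⦄, y ∈ s → x ≠ y → ∀ ⦃a b : ℝ⦄, 0 < a → 0 < b → a + b = 1 →
    min (g x) (g y) < g (a * x + b * y)

/-- Strict quasiconvexity of a real function on a set. -/
def StrictQuasiconvexOn (s : Set ℝ) (g : ℝ → ℝ) : Prop :=
  ∀ ⦃x⦄, x ∈ s → ∀ ⦃y⦄, y ∈ s → x ≠ y → ∀ ⦃a b : ℝ⦄, 0 < a → 0 < b → a + b = 1 →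
    g (a * x + b * y) < max (g x) (g y)

/-- `(r, δ)` is an equilibrium: `r` maximizes the median voter's payoff given `δ`,
and `δ ∈ [0,1]²` maximizes the designer's payoff given `r`. -/
def IsEquilibrium (D : CostDist) (phi t A1 A0 B1 B0 gammaMu r d1 d0 : ℝ) : Prop :=
  d1 ∈ Set.Icc (0 : ℝ) 1 ∧ d0 ∈ Set.Icc (0 : ℝ) 1 ∧
  (∀ r' : ℝ, V D phi t gammaMu d1 d0 r' ≤ V D phi t gammaMu d1 d0 r) ∧
  (∀ e1 ∈ Set.Icc (0 : ℝ) 1, ∀ e0 ∈ Set.Icc (0 : ℝ) 1,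
    EUD D phi A1 A0 B1 B0 r e1 e0 ≤ EUD D phi A1 A0 B1 B0 r d1 d0)

namespace MyAux

lemma concave_slope {L : ℝ → ℝ} (hL : ConcaveOn ℝ Set.univ L) {a b c d : ℝ}
    (hab : a ≤ b) (hac : a ≤ c) (hsum : a + d = b + c) : L a + L d ≤ L b + L c := by
  have hbd : b ≤ d := by linarith
  rcases eq_or_lt_of_le (hab.trans hbd) with h | h
  · have hb : b = a := le_antisymm (by linarith) hab
    have hc : c = a := by linarith
    have hd : d = a := by linarith
    simp [hb, hc, hd]
  · set lam : ℝ := (d - b) / (d - a) with hlam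
    have hda : (0:ℝ) < d - a := by linarith
    have h1 : 0 ≤ lam := div_nonneg (by linarith) hda.le
    have h2 : 0 ≤ 1 - lam := by
      have : lam ≤ 1 := (div_le_one hda).2 (by linarith)
      linarith
    have hb' := hL.2 (Set.mem_univ a) (Set.mem_univ d) h1 h2 (by ring)
    have hc' := hL.2 (Set.mem_univ a) (Set.mem_univ d) h2 h1 (by ring)
    rw [smul_eq_mul, smul_eq_mul, smul_eq_mul, smul_eq_mul] at hb' hc'
    have eb : lam * a + (1 - lam) * d = b := by
      have hl : lam * (d - a) = d - b := by rw [hlam]; exact div_mul_cancel₀ _ hda.ne'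
      linear_combination -hl
    have ec : (1 - lam) * a + lam * d = c := by
      have hcd : c = a + d - b := by linarith
      rw [hcd]
      have hl : lam * (d - a) = d - b := by rw [hlam]; exact div_mul_cancel₀ _ hda.ne'
      linear_combination hl
    rw [eb] at hb'
    rw [ec] at hc'
    linarith

lemma f_pair_le (D : CostDist) {a b c d : ℝ}
    (hab : a ≤ b) (hac : a ≤ c) (hsum : a + d = b + c) :
    D.f a * D.f d ≤ D.f b * D.f c := by
  have h := concave_slope D.f_logConcave hab hac hsum
  have h2 := Real.exp_le_exp.2 h
  rwa [Real.exp_add, Real.exp_add, Real.exp_log (D.f_pos _), Real.exp_log (D.f_pos _),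
    Real.exp_log (D.f_pos _), Real.exp_log (D.f_pos _)] at h2

lemma integrableOn_Ioi (D : CostDist) (a : ℝ) : IntegrableOn D.f (Set.Ioi a) :=
  integrableOn_Ioi_deriv_of_nonneg' (fun x _ => D.deriv_eq x) (fun x _ => (D.f_pos x).le)
    D.tendsto_top

lemma integral_Ioi (D : CostDist) (a : ℝ) : ∫ x in Set.Ioi a, D.f x = 1 - D.F a :=
  integral_Ioi_of_hasDerivAt_of_tendsto' (fun x _ => D.deriv_eq x) (integrableOn_Ioi D a)
    D.tendsto_top

lemma integrableOn_comp_iff (e : ℝ → ℝ) (me : MeasurableEmbedding e)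
    (hmap : Measure.map e (volume : Measure ℝ) = volume) (g : ℝ → ℝ) (s : Set ℝ) :
    IntegrableOn (fun x => g (e x)) (e ⁻¹' s) ↔ IntegrableOn g s := by
  rw [IntegrableOn, IntegrableOn]
  conv_rhs => rw [← hmap]
  rw [me.restrict_map, me.integrable_map_iff]
  rfl

lemma setIntegral_comp (e : ℝ → ℝ) (me : MeasurableEmbedding e)
    (hmap : Measure.map e (volume : Measure ℝ) = volume) (g : ℝ → ℝ) (s : Set ℝ) :
    ∫ x in e ⁻¹' s, g (e x) = ∫ x in s, g x := by
  have h := me.setIntegral_map (μ := (volume : Measure ℝ)) g s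
  rw [hmap] at h
  exact h.symm

lemma integrableOn_Iic (D : CostDist) (a : ℝ) : IntegrableOn D.f (Set.Iic a) := by
  have me : MeasurableEmbedding fun x : ℝ => -x :=
    (Homeomorph.neg ℝ).isClosedEmbedding.measurableEmbedding
  have hmap : Measure.map (fun x : ℝ => -x) (volume : Measure ℝ) = volume :=
    Measure.map_neg_eq_self (volume : Measure ℝ)
  have hd : ∀ x ∈ Set.Ici (-a), HasDerivAt (fun y : ℝ => -D.F (-y)) (D.f (-x)) x := by
    intro x _
    have h1 : HasDerivAt (fun y : ℝ => D.F (-y)) (D.f (-x) * (-1)) x :=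
      (D.deriv_eq (-x)).comp x (hasDerivAt_neg x)
    have h2 : HasDerivAt (fun y : ℝ => -D.F (-y)) (-(D.f (-x) * (-1))) x := h1.neg
    convert h2 using 1
    ring
  have ht : Filter.Tendsto (fun y : ℝ => -D.F (-y)) Filter.atTop (nhds 0) := by
    have : Filter.Tendsto (fun y : ℝ => D.F (-y)) Filter.atTop (nhds 0) :=
      D.tendsto_bot.comp Filter.tendsto_neg_atTop_atBot
    simpa using this.neg
  have key : IntegrableOn (fun x : ℝ => D.f (-x)) (Set.Ioi (-a)) :=
    integrableOn_Ioi_deriv_of_nonneg' hd (fun x _ => (D.f_pos (-x)).le) ht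
  have key2 : IntegrableOn (fun x : ℝ => D.f (-x)) (Set.Ici (-a)) :=
    (integrableOn_Ici_iff_integrableOn_Ioi).2 key
  have hpre : (fun x : ℝ => -x) ⁻¹' Set.Iic a = Set.Ici (-a) := by
    ext x; simp [neg_le]
  rw [← integrableOn_comp_iff (fun x : ℝ => -x) me hmap D.f (Set.Iic a), hpre]
  exact key2

lemma integral_Iic (D : CostDist) (a : ℝ) : ∫ x in Set.Iic a, D.f x = D.F a := by
  have h := integral_Iic_of_hasDerivAt_of_tendsto' (fun x _ => D.deriv_eq x)
    (integrableOn_Iic D a) D.tendsto_bot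
  simpa using h

lemma integrable (D : CostDist) : Integrable D.f := by
  rw [← integrableOn_univ, ← Set.Iic_union_Ioi (a := (0:ℝ))]
  exact (integrableOn_Iic D 0).union (integrableOn_Ioi D 0)

lemma haz (D : CostDist) {x y : ℝ} (hxy : x ≤ y) :
    (1 - D.F y) * D.f x ≤ (1 - D.F x) * D.f y := by
  set c : ℝ := y - x with hc
  have me : MeasurableEmbedding fun z : ℝ => z + c :=
    (Homeomorph.addRight c).isClosedEmbedding.measurableEmbedding
  have hmap : Measure.map (fun z : ℝ => z + c) (volume : Measure ℝ) = volume :=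
    map_add_right_eq_self (volume : Measure ℝ) c
  have hpre : (fun z : ℝ => z + c) ⁻¹' Set.Ioi y = Set.Ioi x := by
    ext z; simp [Set.mem_Ioi]; constructor <;> intro h <;> linarith
  have hint : IntegrableOn (fun z : ℝ => D.f (z + c)) (Set.Ioi x) := by
    rw [← hpre]
    exact (integrableOn_comp_iff _ me hmap D.f (Set.Ioi y)).2 (integrableOn_Ioi D y)
  have heq : ∫ z in Set.Ioi x, D.f (z + c) = 1 - D.F y := by
    rw [← hpre, setIntegral_comp _ me hmap D.f (Set.Ioi y), integral_Ioi D y]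
  have hmono : ∫ z in Set.Ioi x, D.f (z + c) * D.f x ≤ ∫ z in Set.Ioi x, D.f z * D.f y := by
    refine setIntegral_mono_on (hint.mul_const _) ((integrableOn_Ioi D x).mul_const _)
      measurableSet_Ioi ?_
    intro z hz
    have := f_pair_le D (a := x) (b := y) (c := z) (d := z + c) hxy (le_of_lt hz) (by ring)
    nlinarith [this]
  rw [integral_mul_const, integral_mul_const, heq, integral_Ioi D x] at hmono
  exact hmono

lemma revhaz (D : CostDist) {x y : ℝ} (hxy : x ≤ y) :
    D.F x * D.f y ≤ D.F y * D.f x := by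
  set c : ℝ := y - x with hc
  have me : MeasurableEmbedding fun z : ℝ => z + c :=
    (Homeomorph.addRight c).isClosedEmbedding.measurableEmbedding
  have hmap : Measure.map (fun z : ℝ => z + c) (volume : Measure ℝ) = volume :=
    map_add_right_eq_self (volume : Measure ℝ) c
  have hpre : (fun z : ℝ => z + c) ⁻¹' Set.Iic y = Set.Iic x := by
    ext z; simp [Set.mem_Iic]; constructor <;> intro h <;> linarith
  have hint : IntegrableOn (fun z : ℝ => D.f (z + c)) (Set.Iic x) := by
    rw [← hpre]
    exact (integrableOn_comp_iff _ me hmap D.f (Set.Iic y)).2 (integrableOn_Iic D y)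
  have heq : ∫ z in Set.Iic x, D.f (z + c) = D.F y := by
    rw [← hpre, setIntegral_comp _ me hmap D.f (Set.Iic y), integral_Iic D y]
  have hmono : ∫ z in Set.Iic x, D.f z * D.f y ≤ ∫ z in Set.Iic x, D.f (z + c) * D.f x := by
    refine setIntegral_mono_on ((integrableOn_Iic D x).mul_const _) (hint.mul_const _)
      measurableSet_Iic ?_
    intro z hz
    have := f_pair_le D (a := z) (b := z + c) (c := x) (d := y) (by simp [hc]; linarith) hz
      (by ring)
    nlinarith [this]
  rw [integral_mul_const, integral_mul_const, heq, integral_Iic D x] at hmono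
  exact hmono

lemma global_max (g dg : ℝ → ℝ) (kstar : ℝ) (hderiv : ∀ x, HasDerivAt g (dg x) x)
    (hsign1 : ∀ x, x ≤ kstar → 0 ≤ dg x) (hsign2 : ∀ x, kstar ≤ x → dg x ≤ 0) :
    ∀ x, g x ≤ g kstar := by
  have hcont : Continuous g :=
    continuous_iff_continuousAt.2 fun x => (hderiv x).continuousAt
  have hdiff : Differentiable ℝ g := fun x => (hderiv x).differentiableAt
  intro x
  rcases le_total x kstar with h | h
  · have hm : MonotoneOn g (Set.Iic kstar) := by
      refine monotoneOn_of_deriv_nonneg (convex_Iic kstar) hcont.continuousOn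
        hdiff.differentiableOn ?_
      intro y hy
      rw [(hderiv y).deriv]
      rw [interior_Iic] at hy
      exact hsign1 y (le_of_lt hy)
    exact hm (Set.mem_Iic.2 h) (Set.mem_Iic.2 le_rfl) h
  · have hm : AntitoneOn g (Set.Ici kstar) := by
      refine antitoneOn_of_deriv_nonpos (convex_Ici kstar) hcont.continuousOn
        hdiff.differentiableOn ?_
      intro y hy
      rw [(hderiv y).deriv]
      rw [interior_Ici] at hy
      exact hsign2 y (le_of_lt hy)
    exact hm (Set.mem_Ici.2 le_rfl) (Set.mem_Ici.2 h) h

end MyAux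

/-- **Proposition 7 (median voter theorem).** For a non-null classifier, the reward
`r* = k_μ*(t)/ρ(δ,φ)` is weakly preferred to any other reward by a set of voters of
probability at least `1/2`; for a null classifier all voters are indifferent among
all rewards. -/
theorem prop7 (D : CostDist) (phi t d1 d0 : ℝ)
    (hphi : phi ∈ Set.Ioc (1 / 2 : ℝ) 1) (ht : 0 ≤ t)
    (hd1 : d1 ∈ Set.Icc (0 : ℝ) 1) (hd0 : d0 ∈ Set.Icc (0 : ℝ) 1)
    (k1v k0v Theta gammaMu kMu : ℝ)
    (hk1 : k1v = t + (1 - D.F k1v) / D.f k1v)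
    (hk0 : k0v = t - D.F k0v / D.f k0v)
    (hTheta : Theta = k0v * D.F k0v + k1v * (1 - D.F k1v) + t * (D.F k1v - D.F k0v))
    (hmed : D.F gammaMu = 1 / 2)
    (hkMu1 : gammaMu ≤ Theta → kMu = k1v)
    (hkMu0 : Theta < gammaMu → kMu = k0v) :
    (rho d1 d0 phi ≠ 0 →
      ∀ r : ℝ,
        (1 : ℝ) / 2 ≤
          ∫ gamma in {gamma : ℝ |
            V D phi t gamma d1 d0 r ≤ V D phi t gamma d1 d0 (kMu / rho d1 d0 phi)},
            D.f gamma) ∧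
    (rho d1 d0 phi = 0 →
      ∀ gamma r r' : ℝ, V D phi t gamma d1 d0 r = V D phi t gamma d1 d0 r') := by
  constructor
  · intro hrho r
    -- first-order conditions rewritten multiplicatively
    have hne1 : D.f k1v ≠ 0 := (D.f_pos k1v).ne'
    have hne0 : D.f k0v ≠ 0 := (D.f_pos k0v).ne'
    have hf1 : (k1v - t) * D.f k1v = 1 - D.F k1v := by
      have h : k1v - t = (1 - D.F k1v) / D.f k1v := by linarith [hk1]
      rw [h, div_mul_cancel₀ _ hne1]
    have hf0 : (t - k0v) * D.f k0v = D.F k0v := by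
      have h : t - k0v = D.F k0v / D.f k0v := by linarith [hk0]
      rw [h, div_mul_cancel₀ _ hne0]
    -- global maximality of g1 at k1v
    have hg1max : ∀ K : ℝ, (t - K) * D.F K + K ≤ (t - k1v) * D.F k1v + k1v := by
      refine MyAux.global_max _ (fun K => (t - K) * D.f K + (1 - D.F K)) k1v ?_ ?_ ?_
      · intro x
        have h1 : HasDerivAt (fun K => (t - K) * D.F K) ((0 - 1) * D.F x + (t - x) * D.f x) x :=
          ((hasDerivAt_const x t).sub (hasDerivAt_id x)).mul (D.deriv_eq x)
        have h2 : HasDerivAt (fun K => (t - K) * D.F K + K) ((0 - 1) * D.F x + (t - x) * D.f x + 1) x :=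
          h1.add (hasDerivAt_id x)
        convert h2 using 1
        ring
      · intro x hx
        have hh := MyAux.haz D hx
        rw [← hf1] at hh
        have hx1 : (k1v - t) * D.f x ≤ 1 - D.F x :=
          le_of_mul_le_mul_right (by nlinarith [hh]) (D.f_pos k1v)
        show 0 ≤ (t - x) * D.f x + (1 - D.F x)
        nlinarith [mul_nonneg (sub_nonneg.2 hx) (D.f_pos x).le]
      · intro x hx
        have hh := MyAux.haz D hx
        rw [← hf1] at hh
        have hx1 : 1 - D.F x ≤ (k1v - t) * D.f x :=
          le_of_mul_le_mul_right (by nlinarith [hh]) (D.f_pos k1v)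
        show (t - x) * D.f x + (1 - D.F x) ≤ 0
        nlinarith [mul_nonneg (sub_nonneg.2 hx) (D.f_pos x).le]
    -- global maximality of g0 at k0v
    have hg0max : ∀ K : ℝ, (t - K) * D.F K ≤ (t - k0v) * D.F k0v := by
      refine MyAux.global_max _ (fun K => (t - K) * D.f K - D.F K) k0v ?_ ?_ ?_
      · intro x
        have h1 : HasDerivAt (fun K => (t - K) * D.F K) ((0 - 1) * D.F x + (t - x) * D.f x) x :=
          ((hasDerivAt_const x t).sub (hasDerivAt_id x)).mul (D.deriv_eq x)
        convert h1 using 1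
        ring
      · intro x hx
        have hh := MyAux.revhaz D hx
        rw [← hf0] at hh
        have hx1 : D.F x ≤ (t - k0v) * D.f x :=
          le_of_mul_le_mul_right (by nlinarith [hh]) (D.f_pos k0v)
        show 0 ≤ (t - x) * D.f x - D.F x
        nlinarith [mul_nonneg (sub_nonneg.2 hx) (D.f_pos x).le]
      · intro x hx
        have hh := MyAux.revhaz D hx
        rw [← hf0] at hh
        have hx1 : (t - k0v) * D.f x ≤ D.F x :=
          le_of_mul_le_mul_right (by nlinarith [hh]) (D.f_pos k0v)
        show (t - x) * D.f x - D.F x ≤ 0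
        nlinarith [mul_nonneg (sub_nonneg.2 hx) (D.f_pos x).le]
    have hTeq : (t - k1v) * D.F k1v + k1v - (t - k0v) * D.F k0v = Theta := by
      rw [hTheta]; ring
    have hkstar : kMu / rho d1 d0 phi * rho d1 d0 phi = kMu := div_mul_cancel₀ _ hrho
    have hVform : ∀ γ s : ℝ, V D phi t γ d1 d0 s
        = (t - s * rho d1 d0 phi) * D.F (s * rho d1 d0 phi)
          + max (s * rho d1 d0 phi - γ) 0 := by
      intro γ s
      have e1 : EU1 D phi t γ d1 d0 s
          = (t - s * rho d1 d0 phi) * D.F (s * rho d1 d0 phi) + (s * rho d1 d0 phi - γ) := by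
        simp only [EU1]; ring
      have e0 : EU0 D phi t d1 d0 s
          = (t - s * rho d1 d0 phi) * D.F (s * rho d1 d0 phi) + 0 := by
        simp only [EU0]; ring
      rw [V, e1, e0, max_add_add_left]
    -- median voter optimality
    have hmedopt : ∀ K : ℝ, (t - K) * D.F K + max (K - gammaMu) 0
        ≤ (t - kMu) * D.F kMu + max (kMu - gammaMu) 0 := by
      intro K
      by_cases hcase : gammaMu ≤ Theta
      · rw [hkMu1 hcase]
        have hmax1 := le_max_left (k1v - gammaMu) (0 : ℝ)
        have hL : (t - K) * D.F K + max (K - gammaMu) 0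
            ≤ (t - k1v) * D.F k1v + k1v - gammaMu := by
          rcases le_total (K - gammaMu) 0 with h | h
          · rw [max_eq_right h]
            linarith [hg0max K]
          · rw [max_eq_left h]
            linarith [hg1max K]
        linarith
      · push_neg at hcase
        rw [hkMu0 hcase]
        have hmax0 := le_max_right (k0v - gammaMu) (0 : ℝ)
        have hL : (t - K) * D.F K + max (K - gammaMu) 0 ≤ (t - k0v) * D.F k0v := by
          rcases le_total (K - gammaMu) 0 with h | h
          · rw [max_eq_right h]
            linarith [hg0max K]
          · rw [max_eq_left h]
            linarith [hg1max K]
        linarith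
    have maxfact : ∀ a b g g' : ℝ, a ≤ b → g ≤ g' →
        max (b - g') 0 - max (a - g') 0 ≤ max (b - g) 0 - max (a - g) 0 := by
      intro a b g g' hab hgg'
      simp only [max_def]
      split_ifs <;> linarith
    rcases le_total (r * rho d1 d0 phi) kMu with hcmp | hcmp
    · have hsub : Set.Iic gammaMu ⊆
          {γ : ℝ | V D phi t γ d1 d0 r ≤ V D phi t γ d1 d0 (kMu / rho d1 d0 phi)} := by
        intro γ hγ
        simp only [Set.mem_setOf_eq]
        rw [hVform γ r, hVform γ (kMu / rho d1 d0 phi), hkstar]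
        have hm := hmedopt (r * rho d1 d0 phi)
        have hx := maxfact (r * rho d1 d0 phi) kMu γ gammaMu hcmp hγ
        linarith
      calc (1 : ℝ) / 2 = D.F gammaMu := hmed.symm
        _ = ∫ γ in Set.Iic gammaMu, D.f γ := (MyAux.integral_Iic D gammaMu).symm
        _ ≤ _ := by
            refine setIntegral_mono_set ((MyAux.integrable D).integrableOn) ?_
              hsub.eventuallyLE
            exact Filter.Eventually.of_forall fun x => (D.f_pos x).le
    · have hsub : Set.Ioi gammaMu ⊆
          {γ : ℝ | V D phi t γ d1 d0 r ≤ V D phi t γ d1 d0 (kMu / rho d1 d0 phi)} := by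
        intro γ hγ
        simp only [Set.mem_setOf_eq]
        rw [hVform γ r, hVform γ (kMu / rho d1 d0 phi), hkstar]
        have hm := hmedopt (r * rho d1 d0 phi)
        have hx := maxfact kMu (r * rho d1 d0 phi) gammaMu γ hcmp (le_of_lt hγ)
        linarith
      calc (1 : ℝ) / 2 = 1 - D.F gammaMu := by rw [hmed]; norm_num
        _ = ∫ γ in Set.Ioi gammaMu, D.f γ := (MyAux.integral_Ioi D gammaMu).symm
        _ ≤ _ := by
            refine setIntegral_mono_set ((MyAux.integrable D).integrableOn) ?_
              hsub.eventuallyLE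
            exact Filter.Eventually.of_forall fun x => (D.f_pos x).le
  · intro h0 gamma r r'
    simp only [V, EU1, EU0, h0, mul_zero]
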